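/- Let q ∈ M(μ,σ). Then (μ_F − μ)² + (σ_F − σ)² ≤ d²(q_F, q) ≤ (μ_F − μ)² + (σ_F − σ)² + 2σσ_F; that is, ε_min ≤ d²(q_F, q) ≤ ε_min + 2σσ_F. In particular, if ε < ε_min then M_ε(μ,σ) := { q ∈ M(μ,σ) : d²(q_F, q) ≤ ε } is empty. -/
import Mathlib


open MeasureTheory Set Filter

noncomputable section

/-- Integral over the interval (0,1) with Lebesgue measure. -/
def intI (f : ℝ → ℝ) : ℝ := ∫ u in Ioo (0:ℝ) 1, f u

/-- Square integrability on (0,1). -/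
def SqInt (f : ℝ → ℝ) : Prop :=
  IntegrableOn f (Ioo (0:ℝ) 1) volume ∧ IntegrableOn (fun u => f u ^ 2) (Ioo (0:ℝ) 1) volume

/-- A quantile function: nondecreasing and square-integrable on (0,1). -/
def IsQuantile (q : ℝ → ℝ) : Prop := MonotoneOn q (Ioo (0:ℝ) 1) ∧ SqInt q

/-- Membership in `M(μ,σ)` : quantile function with prescribed first two moments. -/
def MemM (μ σ : ℝ) (q : ℝ → ℝ) : Prop :=
  IsQuantile q ∧ intI q = μ ∧ intI (fun u => q u ^ 2) = μ ^ 2 + σ ^ 2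

/-- Squared Wasserstein distance between (quantile) functions on (0,1). -/
def W2 (p q : ℝ → ℝ) : ℝ := intI (fun u => (p u - q u) ^ 2)

/-- Almost-everywhere equality on (0,1). -/
def AeEqI (f g : ℝ → ℝ) : Prop := f =ᵐ[(volume : Measure ℝ).restrict (Ioo (0:ℝ) 1)] g

/-- The penalized objective `J_δ(q) = ∫ γ q − δ d²(q_F, q)`. -/
def Jpen (γ qF : ℝ → ℝ) (δ : ℝ) (q : ℝ → ℝ) : ℝ :=
  intI (fun u => γ u * q u) - δ * W2 qF q

lemma mul_integrableOn {f g : ℝ → ℝ}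
    (hf : IntegrableOn f (Ioo (0:ℝ) 1) volume)
    (hf2 : IntegrableOn (fun u => f u ^ 2) (Ioo (0:ℝ) 1) volume)
    (hg : IntegrableOn g (Ioo (0:ℝ) 1) volume)
    (hg2 : IntegrableOn (fun u => g u ^ 2) (Ioo (0:ℝ) 1) volume) :
    IntegrableOn (fun u => f u * g u) (Ioo (0:ℝ) 1) volume := by
  have hb : IntegrableOn (fun u => (f u ^ 2 + g u ^ 2) / 2) (Ioo (0:ℝ) 1) volume :=
    (hf2.add hg2).div_const 2
  refine Integrable.mono' hb (hf.1.mul hg.1) (Filter.Eventually.of_forall fun u => ?_)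
  simp only [Real.norm_eq_abs]
  rw [abs_mul]
  nlinarith [abs_nonneg (f u), abs_nonneg (g u), sq_abs (f u), sq_abs (g u),
    sq_nonneg (|f u| - |g u|)]

lemma intI_const (k : ℝ) : intI (fun _ => k) = k := by
  simp [intI, Real.volume_Ioo]

lemma intI_comb {f g : ℝ → ℝ}
    (hf : IntegrableOn f (Ioo (0:ℝ) 1) volume)
    (hf2 : IntegrableOn (fun u => f u ^ 2) (Ioo (0:ℝ) 1) volume)
    (hg : IntegrableOn g (Ioo (0:ℝ) 1) volume)
    (hg2 : IntegrableOn (fun u => g u ^ 2) (Ioo (0:ℝ) 1) volume)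
    (a b c d e k : ℝ) :
    intI (fun u => a * f u ^ 2 + b * g u ^ 2 + c * (f u * g u) + d * f u + e * g u + k) =
      a * intI (fun u => f u ^ 2) + b * intI (fun u => g u ^ 2)
        + c * intI (fun u => f u * g u) + d * intI f + e * intI g + k := by
  have hfg := mul_integrableOn hf hf2 hg hg2
  have h1 : IntegrableOn (fun u => a * f u ^ 2) (Ioo (0:ℝ) 1) volume := hf2.const_mul a
  have h2 : IntegrableOn (fun u => b * g u ^ 2) (Ioo (0:ℝ) 1) volume := hg2.const_mul b
  have h3 : IntegrableOn (fun u => c * (f u * g u)) (Ioo (0:ℝ) 1) volume := hfg.const_mul c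
  have h4 : IntegrableOn (fun u => d * f u) (Ioo (0:ℝ) 1) volume := hf.const_mul d
  have h5 : IntegrableOn (fun u => e * g u) (Ioo (0:ℝ) 1) volume := hg.const_mul e
  have h12 : IntegrableOn (fun u => a * f u ^ 2 + b * g u ^ 2) (Ioo (0:ℝ) 1) volume := h1.add h2
  have h123 : IntegrableOn (fun u => a * f u ^ 2 + b * g u ^ 2 + c * (f u * g u)) (Ioo (0:ℝ) 1) volume := h12.add h3
  have h1234 : IntegrableOn (fun u => a * f u ^ 2 + b * g u ^ 2 + c * (f u * g u) + d * f u) (Ioo (0:ℝ) 1) volume := h123.add h4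
  have h12345 : IntegrableOn (fun u => a * f u ^ 2 + b * g u ^ 2 + c * (f u * g u) + d * f u + e * g u) (Ioo (0:ℝ) 1) volume := h1234.add h5
  unfold intI
  rw [integral_add h12345 (integrable_const k),
      integral_add h1234 h5,
      integral_add h123 h4,
      integral_add h12 h3,
      integral_add h1 h2,
      integral_const_mul, integral_const_mul, integral_const_mul,
      integral_const_mul, integral_const_mul]
  have hk : ∫ _ in Ioo (0:ℝ) 1, (k:ℝ) = k := intI_const k
  rw [hk]


lemma chebyshev_int {f g : ℝ → ℝ}
    (hfm : MonotoneOn f (Ioo (0:ℝ) 1)) (hgm : MonotoneOn g (Ioo (0:ℝ) 1))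
    (hf : IntegrableOn f (Ioo (0:ℝ) 1) volume)
    (hf2 : IntegrableOn (fun u => f u ^ 2) (Ioo (0:ℝ) 1) volume)
    (hg : IntegrableOn g (Ioo (0:ℝ) 1) volume)
    (hg2 : IntegrableOn (fun u => g u ^ 2) (Ioo (0:ℝ) 1) volume) :
    intI f * intI g ≤ intI (fun u => f u * g u) := by
  set ν := (volume : Measure ℝ).restrict (Ioo (0:ℝ) 1) with hν
  have hfg : Integrable (fun u => f u * g u) ν := mul_integrableOn hf hf2 hg hg2
  have hone : Integrable (fun _ : ℝ => (1:ℝ)) ν := integrable_const 1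
  have hA : Integrable (fun z : ℝ × ℝ => (f z.1 * g z.1) * 1) (ν.prod ν) :=
    hfg.mul_prod hone
  have hB : Integrable (fun z : ℝ × ℝ => f z.1 * g z.2) (ν.prod ν) := hf.mul_prod hg
  have hC : Integrable (fun z : ℝ × ℝ => g z.1 * f z.2) (ν.prod ν) := hg.mul_prod hf
  have hD : Integrable (fun z : ℝ × ℝ => 1 * (f z.2 * g z.2)) (ν.prod ν) :=
    hone.mul_prod hfg
  have hmem : ∀ᵐ z ∂(ν.prod ν), z ∈ (Ioo (0:ℝ) 1) ×ˢ (Ioo (0:ℝ) 1) := by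
    rw [hν, Measure.prod_restrict]
    exact ae_restrict_mem (measurableSet_Ioo.prod measurableSet_Ioo)
  have hnn : 0 ≤ ∫ z : ℝ × ℝ,
      ((f z.1 * g z.1) * 1 - f z.1 * g z.2 - g z.1 * f z.2 + 1 * (f z.2 * g z.2))
      ∂(ν.prod ν) := by
    refine integral_nonneg_of_ae (hmem.mono fun z hz => ?_)
    simp only [Pi.zero_apply]
    have h1 := hz.1
    have h2 := hz.2
    rcases le_total z.1 z.2 with h | h
    · nlinarith [hfm h1 h2 h, hgm h1 h2 h]
    · nlinarith [hfm h2 h1 h, hgm h2 h1 h]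
  have eA : (∫ z : ℝ × ℝ, (f z.1 * g z.1) * 1 ∂(ν.prod ν))
      = (∫ u, f u * g u ∂ν) * ∫ _, (1:ℝ) ∂ν := integral_prod_mul (fun u => f u * g u) (fun _ => (1:ℝ))
  have eB : (∫ z : ℝ × ℝ, f z.1 * g z.2 ∂(ν.prod ν))
      = (∫ u, f u ∂ν) * ∫ u, g u ∂ν := integral_prod_mul f g
  have eC : (∫ z : ℝ × ℝ, g z.1 * f z.2 ∂(ν.prod ν))
      = (∫ u, g u ∂ν) * ∫ u, f u ∂ν := integral_prod_mul g f
  have eD : (∫ z : ℝ × ℝ, 1 * (f z.2 * g z.2) ∂(ν.prod ν))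
      = (∫ _, (1:ℝ) ∂ν) * ∫ u, f u * g u ∂ν := integral_prod_mul (fun _ => (1:ℝ)) (fun u => f u * g u)
  have h1 : (∫ _, (1:ℝ) ∂ν) = 1 := intI_const 1
  have hAB : Integrable (fun z : ℝ × ℝ => f z.1 * g z.1 * 1 - f z.1 * g z.2) (ν.prod ν) :=
    hA.sub hB
  have hABC : Integrable
      (fun z : ℝ × ℝ => f z.1 * g z.1 * 1 - f z.1 * g z.2 - g z.1 * f z.2) (ν.prod ν) :=
    hAB.sub hC
  rw [integral_add hABC hD, integral_sub hAB hC,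
      integral_sub hA hB, eA, eB, eC, eD, h1] at hnn
  have hI1 : intI (fun u => f u * g u) = ∫ u, f u * g u ∂ν := rfl
  have hI2 : intI f = ∫ u, f u ∂ν := rfl
  have hI3 : intI g = ∫ u, g u ∂ν := rfl
  rw [hI1, hI2, hI3]
  nlinarith [hnn]

theorem statement0
    (μ μF σ σF : ℝ) (hσpos : 0 < σ) (hσFpos : 0 < σF)
    (qF : ℝ → ℝ) (hqF : IsQuantile qF)
    (hqFm : intI qF = μF) (hqF2 : intI (fun u => qF u ^ 2) = μF ^ 2 + σF ^ 2)
    (εmin : ℝ) (hεmin : εmin = (μF - μ) ^ 2 + (σF - σ) ^ 2) :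
    (∀ q : ℝ → ℝ, MemM μ σ q →
        εmin ≤ W2 qF q ∧ W2 qF q ≤ εmin + 2 * σ * σF) ∧
    ∀ ε : ℝ, ε < εmin → {q : ℝ → ℝ | MemM μ σ q ∧ W2 qF q ≤ ε} = ∅ := by
  have key : ∀ q : ℝ → ℝ, MemM μ σ q →
      εmin ≤ W2 qF q ∧ W2 qF q ≤ εmin + 2 * σ * σF := by
    intro q hq
    have hfi := hqF.2.1
    have hfi2 := hqF.2.2
    have hgi := hq.1.2.1
    have hgi2 := hq.1.2.2
    have hqm := hq.2.1
    have hq2 := hq.2.2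
    set I := intI (fun u => qF u * q u) with hI
    -- Cauchy-Schwarz via quadratic nonnegativity
    have hquad : ∀ t : ℝ, 0 ≤ σF ^ 2 - 2 * t * (I - μF * μ) + t ^ 2 * σ ^ 2 := by
      intro t
      have hnn : 0 ≤ intI (fun u => (qF u - μF - t * (q u - μ)) ^ 2) := by
        unfold intI
        exact integral_nonneg fun u => sq_nonneg _
      have hexp : intI (fun u => (qF u - μF - t * (q u - μ)) ^ 2)
          = σF ^ 2 - 2 * t * (I - μF * μ) + t ^ 2 * σ ^ 2 := by
        have heq : (fun u => (qF u - μF - t * (q u - μ)) ^ 2)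
            = fun u => 1 * qF u ^ 2 + t ^ 2 * q u ^ 2 + (-2 * t) * (qF u * q u)
              + (-2 * (μF - t * μ)) * qF u + (2 * t * (μF - t * μ)) * q u
              + (μF - t * μ) ^ 2 := by
          funext u; ring
        rw [heq, intI_comb hfi hfi2 hgi hgi2, hqFm, hqF2, hqm, hq2, ← hI]
        ring
      linarith [hexp ▸ hnn]
    have hσ2 : (0:ℝ) < σ ^ 2 := by positivity
    have hJ2 : (I - μF * μ) ^ 2 ≤ σ ^ 2 * σF ^ 2 := by
      have h := hquad ((I - μF * μ) / σ ^ 2)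
      have heq : σF ^ 2 - 2 * ((I - μF * μ) / σ ^ 2) * (I - μF * μ)
          + ((I - μF * μ) / σ ^ 2) ^ 2 * σ ^ 2
          = (σ ^ 2 * σF ^ 2 - (I - μF * μ) ^ 2) / σ ^ 2 := by
        field_simp
        ring
      rw [heq] at h
      have h2 := mul_nonneg h hσ2.le
      rw [div_mul_cancel₀ _ (ne_of_gt hσ2)] at h2
      linarith
    have hub : I - μF * μ ≤ σ * σF := by
      nlinarith [hJ2, mul_pos hσpos hσFpos]
    have hlb : 0 ≤ I - μF * μ := by
      have := chebyshev_int hqF.1 hq.1.1 hfi hfi2 hgi hgi2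
      rw [hqFm, hqm, ← hI] at this
      linarith
    have hW : W2 qF q = μF ^ 2 + σF ^ 2 + μ ^ 2 + σ ^ 2 - 2 * I := by
      unfold W2
      have heq : (fun u => (qF u - q u) ^ 2)
          = fun u => 1 * qF u ^ 2 + 1 * q u ^ 2 + (-2) * (qF u * q u)
            + 0 * qF u + 0 * q u + 0 := by
        funext u; ring
      rw [heq, intI_comb hfi hfi2 hgi hgi2, hqFm, hqF2, hqm, hq2, ← hI]
      ring
    constructor
    · rw [hW, hεmin]; nlinarith [hub]
    · rw [hW, hεmin]; nlinarith [hlb]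
  refine ⟨key, fun ε hε => ?_⟩
  ext q
  simp only [mem_setOf_eq, mem_empty_iff_false, iff_false, not_and, not_le]
  intro hq
  have := (key q hq).1
  linarith
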